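/- Let 0 < d < π/4, b > 0 and β ∈ (0,1). There exists a constant C > 0, depending only on b, d and β, such that for every y ∈ ℂ with |Im y| < d one has Re(z(y)^β) ≥ C · 2^{−β} · e^{β|Re y|}. -/

import Mathlib

/-- Two-parameter Mittag-Leffler function `e_{γ,μ}(z) = ∑ₖ zᵏ / Γ(kγ+μ)`,
with the reciprocal Gamma interpreted as `0` at non-positive integers. -/
noncomputable def mlf (γ μ : ℝ) (z : ℂ) : ℂ :=
  ∑' k : ℕ, (Complex.Gamma (((k : ℝ) * γ + μ : ℝ) : ℂ))⁻¹ * z ^ k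

/-- Hyperbolic contour `z(y) = b (cosh y + i sinh y)`. -/
noncomputable def zc (b : ℝ) (y : ℂ) : ℂ :=
  (b : ℂ) * (Complex.cosh y + Complex.I * Complex.sinh y)

/-- Derivative of the hyperbolic contour, `z'(y) = b (sinh y + i cosh y)`. -/
noncomputable def zcDeriv (b : ℝ) (y : ℂ) : ℂ :=
  (b : ℂ) * (Complex.sinh y + Complex.I * Complex.cosh y)


lemma zc_eq (b : ℝ) (y : ℂ) : zc b y =
    ((b * Real.cosh y.re * (Real.cos y.im - Real.sin y.im) : ℝ) : ℂ) +
    ((b * Real.sinh y.re * (Real.cos y.im + Real.sin y.im) : ℝ) : ℂ) * Complex.I := by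
  rw [zc]
  conv_lhs => rw [← Complex.re_add_im y]
  simp only [Complex.ofReal_mul, Complex.ofReal_sub, Complex.ofReal_add,
    Complex.cosh_add, Complex.sinh_add, Complex.cosh_mul_I, Complex.sinh_mul_I,
    ← Complex.ofReal_cosh, ← Complex.ofReal_sinh, ← Complex.ofReal_cos, ← Complex.ofReal_sin]
  linear_combination ((b : ℂ) * Real.cosh y.re * Real.sin y.im) * Complex.I_sq

lemma zc_re (b : ℝ) (y : ℂ) :
    (zc b y).re = b * Real.cosh y.re * (Real.cos y.im - Real.sin y.im) := by
  rw [zc_eq]; simp [Complex.cos_ofReal_re, Complex.sin_ofReal_re, Complex.sinh_ofReal_re, Complex.cosh_ofReal_re]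

lemma zc_im (b : ℝ) (y : ℂ) :
    (zc b y).im = b * Real.sinh y.re * (Real.cos y.im + Real.sin y.im) := by
  rw [zc_eq]; simp [Complex.cos_ofReal_re, Complex.sin_ofReal_re, Complex.sinh_ofReal_re, Complex.cosh_ofReal_re]


set_option maxHeartbeats 1000000 in
/-- for `0 < d < π/4`, `b > 0`, `β ∈ (0,1)`, there is `C > 0`
(depending only on `b, d, β`) such that `Re(z(y)^β) ≥ C · 2^{-β} · e^{β|Re y|}`
for all `y` in the open strip `|Im y| < d`. -/
theorem stmt2 (d b β : ℝ) (hd : 0 < d) (hd' : d < Real.pi / 4) (hb : 0 < b)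
    (hβ : β ∈ Set.Ioo (0 : ℝ) 1) :
    ∃ C : ℝ, 0 < C ∧ ∀ y : ℂ, |y.im| < d →
      C * (2 : ℝ) ^ (-β) * Real.exp (β * |y.re|) ≤ (zc b y ^ (β : ℂ)).re := by
  obtain ⟨hβ0, hβ1⟩ := hβ
  have hπ := Real.pi_pos
  have hdπ : d < Real.pi / 2 := by linarith
  have hc₀ : 0 < Real.cos d - Real.sin d := by
    have h1 : Real.cos (Real.pi / 4) < Real.cos d :=
      Real.cos_lt_cos_of_nonneg_of_le_pi hd.le (by linarith) hd'
    have h2 : Real.sin d < Real.sin (Real.pi / 4) :=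
      Real.strictMonoOn_sin ⟨by linarith, by linarith⟩ ⟨by linarith, by linarith⟩ hd'
    rw [Real.sin_pi_div_four] at h2
    rw [Real.cos_pi_div_four] at h1
    linarith
  refine ⟨(b * (Real.cos d - Real.sin d)) ^ β * ((Real.cos d - Real.sin d) / 4),
    by positivity, fun y ht => ?_⟩
  obtain ⟨ht1, ht2⟩ := abs_lt.mp ht
  have hchx : (1 : ℝ) ≤ Real.cosh y.re := Real.one_le_cosh y.re
  have hchp : (0 : ℝ) < Real.cosh y.re := Real.cosh_pos y.re
  have hcos : Real.cos d ≤ Real.cos y.im := by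
    rw [← Real.cos_abs y.im]
    exact Real.cos_le_cos_of_nonneg_of_le_pi (abs_nonneg _) (by linarith) ht.le
  have hsin : Real.sin y.im ≤ Real.sin d :=
    (Real.strictMonoOn_sin ⟨by linarith, by linarith⟩ ⟨by linarith, by linarith⟩ ht2).le
  have key1 : Real.cos d - Real.sin d ≤ Real.cos y.im - Real.sin y.im := by linarith
  have hzre_ge : b * (Real.cos d - Real.sin d) * Real.cosh y.re ≤ (zc b y).re := by
    rw [zc_re]
    have h := mul_le_mul_of_nonneg_left key1 (by positivity : (0:ℝ) ≤ b * Real.cosh y.re)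
    linarith
  have hzre_pos : 0 < (zc b y).re := lt_of_lt_of_le (by positivity) hzre_ge
  have hzne : zc b y ≠ 0 := fun h => by simp [h] at hzre_pos
  have hr_pos : 0 < ‖zc b y‖ := norm_pos_iff.mpr hzne
  have hre_le : (zc b y).re ≤ ‖zc b y‖ := Complex.re_le_norm _
  have hr_low : b * (Real.cos d - Real.sin d) * Real.cosh y.re ≤ ‖zc b y‖ :=
    le_trans hzre_ge hre_le
  -- upper bound on |z|
  have hsinh : |Real.sinh y.re| ≤ Real.cosh y.re := by
    rw [abs_le]
    constructor <;> nlinarith [Real.cosh_sq y.re]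
  have hsub : |Real.cos y.im - Real.sin y.im| ≤ 2 := by
    calc |Real.cos y.im - Real.sin y.im| ≤ |Real.cos y.im| + |Real.sin y.im| := abs_sub _ _
      _ ≤ 2 := by linarith [Real.abs_cos_le_one y.im, Real.abs_sin_le_one y.im]
  have hadd : |Real.cos y.im + Real.sin y.im| ≤ 2 := by
    calc |Real.cos y.im + Real.sin y.im| ≤ |Real.cos y.im| + |Real.sin y.im| := abs_add_le _ _
      _ ≤ 2 := by linarith [Real.abs_cos_le_one y.im, Real.abs_sin_le_one y.im]
  have hr_up : ‖zc b y‖ ≤ 4 * (b * Real.cosh y.re) := by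
    have h1 := Complex.norm_le_abs_re_add_abs_im (zc b y)
    have h2 : |(zc b y).re| ≤ 2 * (b * Real.cosh y.re) := by
      rw [zc_re, abs_mul, abs_mul, abs_of_pos hb, abs_of_pos hchp]
      have h := mul_le_mul_of_nonneg_left hsub (by positivity : (0:ℝ) ≤ b * Real.cosh y.re)
      linarith
    have h3 : |(zc b y).im| ≤ 2 * (b * Real.cosh y.re) := by
      rw [zc_im, abs_mul, abs_mul, abs_of_pos hb]
      have h := mul_le_mul_of_nonneg_left
        (mul_le_mul hsinh hadd (abs_nonneg _) hchp.le) hb.le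
      linarith
    linarith
  -- arg bounds
  have hcosφ : Real.cos (zc b y).arg = (zc b y).re / ‖zc b y‖ :=
    Complex.cos_arg hzne
  have hφ2 : |(zc b y).arg| < Real.pi / 2 :=
    Complex.abs_arg_lt_pi_div_two_iff.mpr (Or.inl hzre_pos)
  have hcosφ_ge : (Real.cos d - Real.sin d) / 4 ≤ Real.cos (zc b y).arg := by
    rw [hcosφ, le_div_iff₀ hr_pos]
    calc (Real.cos d - Real.sin d) / 4 * ‖zc b y‖
        ≤ (Real.cos d - Real.sin d) / 4 * (4 * (b * Real.cosh y.re)) :=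
          mul_le_mul_of_nonneg_left hr_up (by positivity)
      _ = b * (Real.cos d - Real.sin d) * Real.cosh y.re := by ring
      _ ≤ (zc b y).re := hzre_ge
  have hcosβφ : Real.cos (zc b y).arg ≤ Real.cos ((zc b y).arg * β) := by
    rw [← Real.cos_abs (zc b y).arg, ← Real.cos_abs ((zc b y).arg * β)]
    apply Real.cos_le_cos_of_nonneg_of_le_pi (abs_nonneg _) (by linarith)
    rw [abs_mul, abs_of_pos hβ0]
    nlinarith [abs_nonneg (zc b y).arg]
  -- compute Re (z ^ β)
  have hre_pow : (zc b y ^ (β : ℂ)).re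
      = ‖zc b y‖ ^ β * Real.cos ((zc b y).arg * β) := by
    rw [Complex.cpow_def_of_ne_zero hzne, Complex.exp_re]
    have h1 : (Complex.log (zc b y) * (β : ℂ)).re = Real.log (‖zc b y‖) * β := by
      simp [Complex.mul_re, Complex.log_re, Complex.log_im]
    have h2 : (Complex.log (zc b y) * (β : ℂ)).im = (zc b y).arg * β := by
      simp [Complex.mul_im, Complex.log_re, Complex.log_im]
    rw [h1, h2, Real.rpow_def_of_pos hr_pos]
  rw [hre_pow]
  have hE : Real.exp |y.re| ≤ 2 * Real.cosh y.re := by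
    rw [Real.cosh_eq]
    rcases abs_cases y.re with ⟨h, _⟩ | ⟨h, _⟩ <;> rw [h] <;>
      nlinarith [Real.exp_pos y.re, Real.exp_pos (-y.re)]
  have hr_low2 : b * (Real.cos d - Real.sin d) * (Real.exp |y.re| / 2)
      ≤ ‖zc b y‖ := by
    have h := mul_le_mul_of_nonneg_left hE
      (by positivity : (0:ℝ) ≤ b * (Real.cos d - Real.sin d) / 2)
    linarith
  have e1 : (b * (Real.cos d - Real.sin d)) ^ β * ((2:ℝ)⁻¹) ^ β * Real.exp |y.re| ^ β
      = (b * (Real.cos d - Real.sin d) * (Real.exp |y.re| / 2)) ^ β := by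
    rw [← Real.mul_rpow (by positivity) (by positivity),
      ← Real.mul_rpow (by positivity) (by positivity)]
    congr 1
    ring
  calc (b * (Real.cos d - Real.sin d)) ^ β * ((Real.cos d - Real.sin d) / 4)
        * (2:ℝ) ^ (-β) * Real.exp (β * |y.re|)
      = (Real.cos d - Real.sin d) / 4
        * ((b * (Real.cos d - Real.sin d)) ^ β * ((2:ℝ)⁻¹) ^ β * Real.exp |y.re| ^ β) := by
        rw [Real.rpow_neg (by norm_num : (0:ℝ) ≤ 2),
          ← Real.inv_rpow (by norm_num : (0:ℝ) ≤ 2), mul_comm β |y.re|, Real.exp_mul]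
        ring
    _ = (Real.cos d - Real.sin d) / 4
        * (b * (Real.cos d - Real.sin d) * (Real.exp |y.re| / 2)) ^ β := by rw [e1]
    _ ≤ (Real.cos d - Real.sin d) / 4 * ‖zc b y‖ ^ β :=
        mul_le_mul_of_nonneg_left (Real.rpow_le_rpow (by positivity) hr_low2 hβ0.le)
          (by positivity)
    _ ≤ ‖zc b y‖ ^ β * Real.cos ((zc b y).arg * β) := by
        rw [mul_comm ((Real.cos d - Real.sin d) / 4)]
        exact mul_le_mul_of_nonneg_left (by linarith) (by positivity)
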